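/- Let (X,d) be a metric space with |X| ≥ n ≥ 2, and suppose T : X → X satisfies: there exists α ∈ [0,1) such that for all n-tuples of points x₁,...,xₙ ∈ X whose underlying set has exactly k elements (where 2 ≤ k ≤ n−1), the inequality S(Tx₁,...,Txₙ) ≤ α·S(x₁,...,xₙ) holds, where S denotes the sum of all pairwise distances. Then for all k pairwise distinct points y₁,...,y_k ∈ X, S(Ty₁,...,Ty_k) ≤ α·S(y₁,...,y_k). -/

import Mathlib

/-- Total pairwise distance of points `x 0, ..., x (n-1)`. -/
noncomputable def totalS {X : Type*} [MetricSpace X] {n : ℕ} (x : Fin n → X) : ℝ :=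
  ∑ i : Fin n, ∑ j ∈ Finset.Ioi i, dist (x i) (x j)

noncomputable def dsum {X : Type*} [MetricSpace X] {m : ℕ} (z : Fin m → X) : ℝ :=
  ∑ i : Fin m, ∑ j : Fin m, dist (z i) (z j)

lemma dsum_eq {X : Type*} [MetricSpace X] {m : ℕ} (z : Fin m → X) :
    dsum z = 2 * totalS z := by
  have h : ∀ i : Fin m, ∑ j : Fin m, dist (z i) (z j)
      = ∑ j ∈ Finset.Iio i, dist (z i) (z j) + ∑ j ∈ Finset.Ioi i, dist (z i) (z j) := by
    intro i
    rw [← Finset.sum_filter_add_sum_filter_not Finset.univ (· < i)]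
    congr 1
    · congr 1; ext j; simp [Finset.mem_Iio]
    · rw [← Finset.sum_filter_add_sum_filter_not (Finset.univ.filter (¬ · < i)) (i < ·)]
      have h1 : (Finset.univ.filter (¬ · < i)).filter (i < ·) = Finset.Ioi i := by
        ext j; simp [Finset.mem_Ioi]; intro h; exact le_of_lt h
      have h2 : (Finset.univ.filter (¬ · < i)).filter (¬ i < ·) = {i} := by
        ext j; simp; omega
      rw [h1, h2]
      simp
  have swap : ∑ i : Fin m, ∑ j ∈ Finset.Iio i, dist (z i) (z j)
      = ∑ i : Fin m, ∑ j ∈ Finset.Ioi i, dist (z i) (z j) := by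
    rw [Finset.sum_sigma', Finset.sum_sigma']
    apply Finset.sum_nbij' (fun p => ⟨p.2, p.1⟩) (fun p => ⟨p.2, p.1⟩) <;>
      simp [dist_comm]
  simp only [dsum, totalS, h, Finset.sum_add_distrib, swap]
  ring

lemma sum_comp_g {n k : ℕ} (hk : k ≤ n) (r : Fin k) (h : Fin k → ℝ) :
    ∑ i : Fin n, h (if hik : (i : ℕ) < k then (⟨i, hik⟩ : Fin k) else r)
      = (∑ a : Fin k, h a) + (n - k : ℕ) * h r := by
  set f : ℕ → ℝ := fun i => if hik : i < k then h ⟨i, hik⟩ else h r with hf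
  have e1 : ∑ i : Fin n, h (if hik : (i : ℕ) < k then (⟨i, hik⟩ : Fin k) else r)
      = ∑ i ∈ Finset.range n, f i := by
    rw [← Fin.sum_univ_eq_sum_range]
    apply Finset.sum_congr rfl
    intro i _
    by_cases hik : (i : ℕ) < k <;> simp [hf, hik]
  rw [e1, ← Finset.sum_range_add_sum_Ico f hk]
  congr 1
  · rw [← Fin.sum_univ_eq_sum_range]
    apply Finset.sum_congr rfl
    intro a _
    simp [hf, a.isLt]
  · rw [Finset.sum_congr rfl (fun i hi => ?_), Finset.sum_const, Nat.card_Ico, nsmul_eq_mul]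
    simp [hf, Nat.not_lt.2 (Finset.mem_Ico.1 hi).1]

lemma dsum_comp {X : Type*} [MetricSpace X] {n k : ℕ} (hk : k ≤ n) (r : Fin k)
    (z : Fin k → X) :
    dsum (z ∘ fun i : Fin n => if hik : (i : ℕ) < k then (⟨i, hik⟩ : Fin k) else r)
      = dsum z + 2 * (n - k : ℕ) * ∑ a : Fin k, dist (z a) (z r) := by
  set g : Fin n → Fin k := fun i => if hik : (i : ℕ) < k then (⟨i, hik⟩ : Fin k) else r with hg
  have inner : ∀ a : Fin k, ∑ j : Fin n, dist (z a) (z (g j))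
      = (∑ b : Fin k, dist (z a) (z b)) + (n - k : ℕ) * dist (z a) (z r) :=
    fun a => sum_comp_g hk r (fun b => dist (z a) (z b))
  have outer : dsum (z ∘ g)
      = (∑ a : Fin k, ∑ j : Fin n, dist (z a) (z (g j)))
        + (n - k : ℕ) * ∑ j : Fin n, dist (z r) (z (g j)) :=
    sum_comp_g hk r (fun a => ∑ j : Fin n, dist (z a) (z (g j)))
  rw [outer, inner r]
  simp only [inner]
  rw [Finset.sum_add_distrib, ← Finset.mul_sum]
  have h3 : ∑ a : Fin k, dist (z a) (z r) = ∑ b : Fin k, dist (z r) (z b) := by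
    simp [dist_comm]
  rw [dist_self]
  unfold dsum
  rw [← h3]
  ring

theorem stmt_0 {X : Type*} [MetricSpace X] (n k : ℕ) (hn : 2 ≤ n)
    (hcard : ∃ f : Fin n → X, Function.Injective f)
    (T : X → X) (α : ℝ) (hα0 : 0 ≤ α) (hα1 : α < 1)
    (hk2 : 2 ≤ k) (hkn : k ≤ n - 1)
    (hT : ∀ x : Fin n → X, (Set.range x).ncard = k → totalS (T ∘ x) ≤ α * totalS x) :
    ∀ y : Fin k → X, Function.Injective y → totalS (T ∘ y) ≤ α * totalS y := by
  intro y hy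
  have hkn' : k ≤ n := le_trans hkn (Nat.sub_le n 1)
  set g : Fin k → Fin n → Fin k :=
    fun r i => if hik : (i : ℕ) < k then (⟨i, hik⟩ : Fin k) else r with hgdef
  -- range condition
  have hrange : ∀ r : Fin k, (Set.range (y ∘ g r)).ncard = k := by
    intro r
    have hsurj : Function.Surjective (g r) := by
      intro a
      refine ⟨⟨(a : ℕ), lt_of_lt_of_le a.isLt hkn'⟩, ?_⟩
      simp [hgdef]
    rw [Set.range_comp, hsurj.range_eq, Set.image_univ,
      ← Set.image_univ, Set.ncard_image_of_injective _ hy, Set.ncard_univ]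
    simp
  -- the contraction inequality in dsum form
  have key : ∀ r : Fin k, dsum ((T ∘ y) ∘ g r) ≤ α * dsum (y ∘ g r) := by
    intro r
    have h1 := hT (y ∘ g r) (hrange r)
    have h2 : T ∘ (y ∘ g r) = (T ∘ y) ∘ g r := rfl
    rw [h2] at h1
    rw [dsum_eq, dsum_eq]
    nlinarith [h1]
  have sumkey := Finset.sum_le_sum (fun r (_ : r ∈ Finset.univ) => key r)
  set D := dsum y with hD
  set D' := dsum (T ∘ y) with hD'
  have lhs : ∑ r : Fin k, dsum ((T ∘ y) ∘ g r) = (k + 2 * (n - k : ℕ)) * D' := by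
    have : ∀ r : Fin k, dsum ((T ∘ y) ∘ g r)
        = D' + 2 * (n - k : ℕ) * ∑ a : Fin k, dist ((T ∘ y) a) ((T ∘ y) r) :=
      fun r => dsum_comp hkn' r (T ∘ y)
    simp only [this]
    rw [Finset.sum_add_distrib, Finset.sum_const, ← Finset.mul_sum]
    have hswap : ∑ r : Fin k, ∑ a : Fin k, dist ((T ∘ y) a) ((T ∘ y) r) = D' := by
      rw [hD']; unfold dsum; exact Finset.sum_comm
    rw [hswap]
    simp
    ring
  have rhs : ∑ r : Fin k, α * dsum (y ∘ g r) = α * ((k + 2 * (n - k : ℕ)) * D) := by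
    rw [← Finset.mul_sum]
    congr 1
    have : ∀ r : Fin k, dsum (y ∘ g r)
        = D + 2 * (n - k : ℕ) * ∑ a : Fin k, dist (y a) (y r) :=
      fun r => dsum_comp hkn' r y
    simp only [this]
    rw [Finset.sum_add_distrib, Finset.sum_const, ← Finset.mul_sum]
    have hswap : ∑ r : Fin k, ∑ a : Fin k, dist (y a) (y r) = D := by
      rw [hD]; unfold dsum; exact Finset.sum_comm
    rw [hswap]
    simp
    ring
  rw [lhs, rhs] at sumkey
  have hCpos : (0 : ℝ) < (k + 2 * (n - k : ℕ)) := by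
    have : (0:ℝ) < (k:ℝ) := by positivity
    positivity
  have hfin : D' ≤ α * D := by
    have e : α * ((k + 2 * (n - k : ℕ)) * D) = (k + 2 * (n - k : ℕ)) * (α * D) := by ring
    rw [e] at sumkey
    exact le_of_mul_le_mul_left sumkey hCpos
  rw [hD, hD', dsum_eq, dsum_eq] at hfin
  linarith
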